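/- Covariance-sum recursion in DBsample: under the 1-dimensional DBsample process with p ∈ (0,1) and 0 < α ≤ min((1-p)/p, p/(1-p)), defining S(k,ℓ) = Σ_{j≤ℓ, j≠k} Cov(z_k, z_j), for all k ≥ 1 and ℓ > k the relation S(k,ℓ) = S(k,ℓ-1) - (α/(ℓ-1))·(p(1-p) + S(k,ℓ-1)) holds. -/
import Mathlib


open Finset

/-- Value in ℝ of a Bernoulli outcome. -/
noncomputable def b2r (b : Bool) : ℝ := if b then 1 else 0

/-- Empirical mean p̂ₖ of the first k samples (0-based: samples x₀, …, x_{k-1}). -/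
noncomputable def phat {n : ℕ} (x : Fin n → Bool) (k : ℕ) : ℝ :=
  (k : ℝ)⁻¹ * ∑ j : Fin n, if (j : ℕ) < k ∧ x j = true then (1 : ℝ) else 0

/-- Parameter used by DBsample at (0-based) step k:
q₀ = p and q_k = clip(p(1+α) - α·p̂ₖ, 0, 1) for k ≥ 1. -/
noncomputable def dbq {n : ℕ} (p α : ℝ) (x : Fin n → Bool) (k : ℕ) : ℝ :=
  if k = 0 then p else min 1 (max 0 (p * (1 + α) - α * phat x k))

section Aux
variable {n : ℕ} (p α : ℝ)

lemma phat_congr (x y : Fin n → Bool) (t : ℕ) (h : ∀ j : Fin n, (j : ℕ) < t → x j = y j) :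
    phat x t = phat y t := by
  unfold phat
  congr 1
  refine Finset.sum_congr rfl fun j _ => ?_
  by_cases hj : (j : ℕ) < t
  · rw [h j hj]
  · simp [hj]

lemma dbq_congr (x y : Fin n → Bool) (t : ℕ) (h : ∀ j : Fin n, (j : ℕ) < t → x j = y j) :
    dbq p α x t = dbq p α y t := by
  unfold dbq
  rcases eq_or_ne t 0 with rfl | ht
  · simp
  · rw [if_neg ht, if_neg ht, phat_congr x y t h]

lemma phat_nonneg (x : Fin n → Bool) (t : ℕ) : 0 ≤ phat x t := by
  unfold phat
  refine mul_nonneg (by positivity) (Finset.sum_nonneg fun j _ => ?_)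
  split <;> norm_num

lemma card_filter_lt (t : ℕ) (ht : t ≤ n) :
    (univ.filter fun i : Fin n => (i : ℕ) < t).card = t := by
  have : (univ.filter fun i : Fin n => (i : ℕ) < t) = Finset.map (Fin.castLEEmb ht) univ := by
    ext i
    simp only [mem_filter, mem_univ, true_and, Finset.mem_map]
    constructor
    · intro hi; exact ⟨⟨(i : ℕ), hi⟩, Fin.ext rfl⟩
    · rintro ⟨a, -, rfl⟩; exact a.isLt
  rw [this, Finset.card_map, Finset.card_univ, Fintype.card_fin]

lemma phat_le_one (x : Fin n → Bool) (t : ℕ) : phat x t ≤ 1 := by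
  unfold phat
  rcases Nat.eq_zero_or_pos t with rfl | ht
  · simp
  have h1 : (∑ j : Fin n, if (j : ℕ) < t ∧ x j = true then (1 : ℝ) else 0) ≤ t := by
    have hle : (∑ j : Fin n, if (j : ℕ) < t ∧ x j = true then (1 : ℝ) else 0)
        ≤ ∑ j : Fin n, if (j : ℕ) < t then (1 : ℝ) else 0 := by
      refine Finset.sum_le_sum fun j _ => ?_
      by_cases hj : (j : ℕ) < t
      · simp only [hj, true_and, if_true]; split <;> norm_num
      · simp [hj]
    refine hle.trans ?_
    rw [Finset.sum_boole]
    have : (univ.filter fun j : Fin n => (j : ℕ) < t).card ≤ t := by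
      have := Finset.card_le_card_of_injOn
        (s := univ.filter fun j : Fin n => (j : ℕ) < t) (t := Finset.range t)
        (fun i : Fin n => (i : ℕ))
        (fun i hi => Finset.mem_range.mpr (Finset.mem_filter.mp hi).2)
        (fun a _ b _ hab => Fin.val_injective hab)
      simpa using this
    exact_mod_cast this
  have ht' : (0 : ℝ) < t := by exact_mod_cast ht
  refine le_trans (mul_le_mul_of_nonneg_left h1 (inv_nonneg.mpr ht'.le)) ?_
  rw [inv_mul_cancel₀ ht'.ne']

lemma dbq_eq (hp0 : 0 < p) (hp1 : p < 1) (hα0 : 0 < α)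
    (hα : α ≤ min ((1 - p) / p) (p / (1 - p))) (x : Fin n → Bool) (t : ℕ) (ht : t ≠ 0) :
    dbq p α x t = p * (1 + α) - α * phat x t := by
  have h1p : (0 : ℝ) < 1 - p := by linarith
  have hα1 : α * p ≤ 1 - p := by
    have h := (le_min_iff.mp hα).1
    calc α * p ≤ ((1 - p) / p) * p := mul_le_mul_of_nonneg_right h hp0.le
      _ = 1 - p := div_mul_cancel₀ _ hp0.ne'
  have hα2 : α * (1 - p) ≤ p := by
    have h := (le_min_iff.mp hα).2
    calc α * (1 - p) ≤ (p / (1 - p)) * (1 - p) := mul_le_mul_of_nonneg_right h h1p.le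
      _ = p := div_mul_cancel₀ _ h1p.ne'
  have hub : p * (1 + α) - α * phat x t ≤ 1 := by
    have h0 : 0 ≤ α * phat x t := mul_nonneg hα0.le (phat_nonneg x t)
    nlinarith
  have hlb : 0 ≤ p * (1 + α) - α * phat x t := by
    have h0 : α * phat x t ≤ α * 1 := mul_le_mul_of_nonneg_left (phat_le_one x t) hα0.le
    nlinarith
  unfold dbq
  rw [if_neg ht, max_eq_right hlb, min_eq_right hub]

end Aux


/-- Joint density of the n DBsample draws. -/
noncomputable def dbDens {n : ℕ} (p α : ℝ) (x : Fin n → Bool) : ℝ :=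
  ∏ k : Fin n, (if x k then dbq p α x (k : ℕ) else 1 - dbq p α x (k : ℕ))

section Engine
variable {n : ℕ} (p α : ℝ)

/-- One factor of the DBsample density. -/
noncomputable def dbFactor (x : Fin n → Bool) (k : Fin n) : ℝ :=
  if x k then dbq p α x (k : ℕ) else 1 - dbq p α x (k : ℕ)

/-- Density using true factors below `t` and uniform (1/2) factors above. -/
noncomputable def densUpTo (t : ℕ) (x : Fin n → Bool) : ℝ :=
  ∏ k : Fin n, if (k : ℕ) < t then dbFactor p α x k else (1 / 2 : ℝ)

lemma dbDens_eq_densUpTo (x : Fin n → Bool) : dbDens p α x = densUpTo p α n x := by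
  unfold dbDens densUpTo dbFactor
  exact Finset.prod_congr rfl fun k _ => by rw [if_pos k.isLt]

lemma dbFactor_congr (x y : Fin n → Bool) (k : Fin n)
    (h : ∀ j : Fin n, (j : ℕ) ≤ (k : ℕ) → x j = y j) :
    dbFactor p α x k = dbFactor p α y k := by
  unfold dbFactor
  rw [h k le_rfl, dbq_congr p α x y (k : ℕ) (fun j hj => h j hj.le)]

lemma sum_split (t : Fin n) (F : (Fin n → Bool) → ℝ) :
    ∑ x : Fin n → Bool, F x
      = ∑ y : {j : Fin n // j ≠ t} → Bool,
          (F ((Equiv.funSplitAt t Bool).symm (true, y))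
            + F ((Equiv.funSplitAt t Bool).symm (false, y))) := by
  rw [← Equiv.sum_comp (Equiv.funSplitAt t Bool).symm F, Fintype.sum_prod_type, Fintype.sum_bool,
    ← Finset.sum_add_distrib]

/-- The erased product, common to all the per-`y` computations. -/
noncomputable def restProd (t : Fin n) (x : Fin n → Bool) : ℝ :=
  ∏ k ∈ Finset.univ.erase t, if (k : ℕ) < (t : ℕ) then dbFactor p α x k else (1 / 2 : ℝ)

lemma densUpTo_succ (t : Fin n) (x : Fin n → Bool) :
    densUpTo p α ((t : ℕ) + 1) x = dbFactor p α x t * restProd p α t x := by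
  unfold densUpTo restProd
  rw [← Finset.mul_prod_erase _ _ (Finset.mem_univ t), if_pos (Nat.lt_succ_self _)]
  congr 1
  refine Finset.prod_congr rfl fun k hk => ?_
  have hkt : (k : ℕ) ≠ (t : ℕ) := fun h => (Finset.mem_erase.mp hk).1 (Fin.val_injective h)
  by_cases h : (k : ℕ) < (t : ℕ)
  · rw [if_pos (Nat.lt_succ_of_lt h), if_pos h]
  · rw [if_neg h, if_neg (by omega)]

lemma densUpTo_self (t : Fin n) (x : Fin n → Bool) :
    densUpTo p α (t : ℕ) x = (1 / 2 : ℝ) * restProd p α t x := by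
  unfold densUpTo restProd
  rw [← Finset.mul_prod_erase _ _ (Finset.mem_univ t), if_neg (lt_irrefl _)]

lemma restProd_congr (t : Fin n) (x y : Fin n → Bool)
    (h : ∀ j : Fin n, (j : ℕ) < (t : ℕ) → x j = y j) :
    restProd p α t x = restProd p α t y := by
  unfold restProd
  refine Finset.prod_congr rfl fun k hk => ?_
  by_cases hlt : (k : ℕ) < (t : ℕ)
  · rw [if_pos hlt, if_pos hlt,
      dbFactor_congr p α x y k (fun j hj => h j (lt_of_le_of_lt hj hlt))]
  · rw [if_neg hlt, if_neg hlt]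

lemma lt_ne (t j : Fin n) (hj : (j : ℕ) < (t : ℕ)) : j ≠ t :=
  fun h => absurd hj (by rw [h]; exact lt_irrefl _)

lemma split_agree (t : Fin n) (y : {j : Fin n // j ≠ t} → Bool) (b b' : Bool)
    (j : Fin n) (hj : j ≠ t) :
    ((Equiv.funSplitAt t Bool).symm (b, y)) j = ((Equiv.funSplitAt t Bool).symm (b', y)) j := by
  simp [hj]

lemma split_at (t : Fin n) (y : {j : Fin n // j ≠ t} → Bool) (b : Bool) :
    ((Equiv.funSplitAt t Bool).symm (b, y)) t = b := by simp

lemma step (t : Fin n) (g : (Fin n → Bool) → ℝ)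
    (hg : ∀ x y : Fin n → Bool, (∀ j : Fin n, (j : ℕ) < (t : ℕ) → x j = y j) → g x = g y) :
    ∑ x : Fin n → Bool, densUpTo p α ((t : ℕ) + 1) x * g x
      = ∑ x : Fin n → Bool, densUpTo p α (t : ℕ) x * g x := by
  rw [sum_split t, sum_split t]
  refine Finset.sum_congr rfl fun y _ => ?_
  set xt := (Equiv.funSplitAt t Bool).symm (true, y) with hxt
  set xf := (Equiv.funSplitAt t Bool).symm (false, y) with hxf
  have hag : ∀ j : Fin n, (j : ℕ) < (t : ℕ) → xt j = xf j :=
    fun j hj => split_agree t y true false j (lt_ne t j hj)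
  have hgf : g xt = g xf := hg _ _ hag
  have hq : dbq p α xt (t : ℕ) = dbq p α xf (t : ℕ) := dbq_congr p α _ _ _ hag
  have hR : restProd p α t xt = restProd p α t xf := restProd_congr p α t _ _ hag
  have ht1 : xt t = true := hxt ▸ split_at t y true
  have ht0 : xf t = false := hxf ▸ split_at t y false
  have hft : dbFactor p α xt t = dbq p α xt (t : ℕ) := by
    unfold dbFactor; rw [ht1]; simp
  have hff : dbFactor p α xf t = 1 - dbq p α xt (t : ℕ) := by
    unfold dbFactor; rw [ht0, hq]; simp
  rw [densUpTo_succ, densUpTo_succ, densUpTo_self, densUpTo_self, hft, hff, hgf, hR]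
  ring

lemma stepz (t : Fin n) (f : (Fin n → Bool) → ℝ)
    (hf : ∀ x y : Fin n → Bool, (∀ j : Fin n, (j : ℕ) < (t : ℕ) → x j = y j) → f x = f y) :
    ∑ x : Fin n → Bool, densUpTo p α ((t : ℕ) + 1) x * (f x * b2r (x t))
      = ∑ x : Fin n → Bool, densUpTo p α (t : ℕ) x * (f x * dbq p α x (t : ℕ)) := by
  rw [sum_split t, sum_split t]
  refine Finset.sum_congr rfl fun y _ => ?_
  set xt := (Equiv.funSplitAt t Bool).symm (true, y) with hxt
  set xf := (Equiv.funSplitAt t Bool).symm (false, y) with hxf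
  have hag : ∀ j : Fin n, (j : ℕ) < (t : ℕ) → xt j = xf j :=
    fun j hj => split_agree t y true false j (lt_ne t j hj)
  have hgf : f xt = f xf := hf _ _ hag
  have hq : dbq p α xt (t : ℕ) = dbq p α xf (t : ℕ) := dbq_congr p α _ _ _ hag
  have hR : restProd p α t xt = restProd p α t xf := restProd_congr p α t _ _ hag
  have ht1 : xt t = true := hxt ▸ split_at t y true
  have ht0 : xf t = false := hxf ▸ split_at t y false
  have hft : dbFactor p α xt t = dbq p α xt (t : ℕ) := by
    unfold dbFactor; rw [ht1]; simp
  have hff : dbFactor p α xf t = 1 - dbq p α xt (t : ℕ) := by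
    unfold dbFactor; rw [ht0, hq]; simp
  have hb1 : b2r (xt t) = 1 := by rw [ht1]; simp [b2r]
  have hb0 : b2r (xf t) = 0 := by rw [ht0]; simp [b2r]
  rw [densUpTo_succ, densUpTo_succ, densUpTo_self, densUpTo_self, hft, hff, hgf, hR, hb1, hb0,
    ← hq]
  ring

lemma densUpTo_sum (t s : ℕ) (hts : t ≤ s) (hsn : s ≤ n) (g : (Fin n → Bool) → ℝ)
    (hg : ∀ x y : Fin n → Bool, (∀ j : Fin n, (j : ℕ) < t → x j = y j) → g x = g y) :
    ∑ x : Fin n → Bool, densUpTo p α s x * g x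
      = ∑ x : Fin n → Bool, densUpTo p α t x * g x := by
  induction s with
  | zero => obtain rfl : t = 0 := Nat.le_zero.mp hts; rfl
  | succ s ih =>
    rcases Nat.lt_or_ge t (s + 1) with h | h
    · have hts' : t ≤ s := Nat.lt_succ_iff.mp h
      have hs : s < n := hsn
      have hstep := step p α ⟨s, hs⟩ g
        (fun x y hxy => hg x y (fun j hj => hxy j (lt_of_lt_of_le hj hts')))
      simp only [] at hstep
      rw [hstep]
      exact ih hts' hs.le
    · obtain rfl : t = s + 1 := le_antisymm hts h
      rfl

lemma key (t : Fin n) (f : (Fin n → Bool) → ℝ)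
    (hf : ∀ x y : Fin n → Bool, (∀ j : Fin n, (j : ℕ) < (t : ℕ) → x j = y j) → f x = f y) :
    ∑ x : Fin n → Bool, dbDens p α x * (f x * b2r (x t))
      = ∑ x : Fin n → Bool, dbDens p α x * (f x * dbq p α x (t : ℕ)) := by
  have h1 : ∀ x y : Fin n → Bool, (∀ j : Fin n, (j : ℕ) < (t : ℕ) + 1 → x j = y j) →
      f x * b2r (x t) = f y * b2r (y t) := by
    intro x y h
    rw [hf x y (fun j hj => h j (Nat.lt_succ_of_lt hj)), h t (Nat.lt_succ_self _)]
  have h2 : ∀ x y : Fin n → Bool, (∀ j : Fin n, (j : ℕ) < (t : ℕ) → x j = y j) →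
      f x * dbq p α x (t : ℕ) = f y * dbq p α y (t : ℕ) := by
    intro x y h
    rw [hf x y h, dbq_congr p α x y _ h]
  simp only [dbDens_eq_densUpTo]
  rw [densUpTo_sum p α ((t : ℕ) + 1) n t.isLt n.le_refl _ h1, stepz p α t f hf,
    ← densUpTo_sum p α (t : ℕ) n t.isLt.le n.le_refl _ h2]

lemma sum_dbDens : ∑ x : Fin n → Bool, dbDens p α x = 1 := by
  have h := densUpTo_sum p α 0 n (Nat.zero_le n) n.le_refl (fun _ => 1)
    (fun _ _ _ => rfl)
  simp only [mul_one] at h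
  have h0 : ∀ x : Fin n → Bool, densUpTo p α 0 x = (1 / 2 : ℝ) ^ n := by
    intro x
    unfold densUpTo
    rw [Finset.prod_congr rfl (fun k _ => if_neg (Nat.not_lt_zero _)), Finset.prod_const,
      Finset.card_univ, Fintype.card_fin]
  calc ∑ x : Fin n → Bool, dbDens p α x
      = ∑ x : Fin n → Bool, densUpTo p α n x := by
        exact Finset.sum_congr rfl fun x _ => dbDens_eq_densUpTo p α x
    _ = ∑ x : Fin n → Bool, densUpTo p α 0 x := h
    _ = (2 ^ n : ℝ) * (1 / 2 : ℝ) ^ n := by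
        simp only [h0, Finset.sum_const, Finset.card_univ, nsmul_eq_mul]
        norm_num [Fintype.card_fun]
    _ = 1 := by rw [one_div, inv_pow, mul_inv_cancel₀ (by positivity)]

end Engine

section Mean
variable {n : ℕ} (p α : ℝ)

lemma indicator_eq (x : Fin n → Bool) (t : ℕ) (j : Fin n) :
    (if (j : ℕ) < t ∧ x j = true then (1 : ℝ) else 0)
      = (if (j : ℕ) < t then b2r (x j) else 0) := by
  by_cases hj : (j : ℕ) < t
  · simp only [hj, true_and, if_true]
    by_cases hx : x j = true <;> simp [hx, b2r]
  · simp [hj]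

lemma b2r_sq (b : Bool) : b2r b * b2r b = b2r b := by cases b <;> simp [b2r]

lemma dbMean (hp0 : 0 < p) (hp1 : p < 1) (hα0 : 0 < α)
    (hα : α ≤ min ((1 - p) / p) (p / (1 - p))) (j : Fin n) :
    ∑ x : Fin n → Bool, dbDens p α x * b2r (x j) = p := by
  have H : ∀ T : ℕ, ∀ j : Fin n, (j : ℕ) = T →
      (∑ x : Fin n → Bool, dbDens p α x * b2r (x j)) = p := by
    intro T
    induction T using Nat.strong_induction_on with
    | _ T ih =>
      intro j hj
      have hkey := key p α j (fun _ => 1) (fun _ _ _ => rfl)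
      simp only [one_mul] at hkey
      rw [hkey]
      rcases Nat.eq_zero_or_pos T with hT0 | hTpos
      · have hq0 : ∀ x : Fin n → Bool, dbq p α x (j : ℕ) = p := by
          intro x; rw [hj, hT0]; unfold dbq; simp
        simp only [hq0]
        rw [← Finset.sum_mul, sum_dbDens, one_mul]
      · have hTne : T ≠ 0 := hTpos.ne'
        have hTn : T < n := hj ▸ j.isLt
        have hexp : ∀ x : Fin n → Bool, dbDens p α x * dbq p α x (j : ℕ)
            = p * (1 + α) * dbDens p α x
              - α * (T : ℝ)⁻¹
                * ∑ i : Fin n, dbDens p α x * (if (i : ℕ) < T then b2r (x i) else 0) := by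
          intro x
          rw [hj, dbq_eq p α hp0 hp1 hα0 hα x T hTne]
          unfold phat
          simp only [indicator_eq]
          rw [← Finset.mul_sum]
          ring
        rw [Finset.sum_congr rfl fun x _ => hexp x, Finset.sum_sub_distrib,
          ← Finset.mul_sum, ← Finset.mul_sum, sum_dbDens, Finset.sum_comm]
        have hinner : ∀ i : Fin n,
            (∑ x : Fin n → Bool, dbDens p α x * (if (i : ℕ) < T then b2r (x i) else 0))
              = if (i : ℕ) < T then p else 0 := by
          intro i
          by_cases hi : (i : ℕ) < T
          · simp only [hi, if_true]
            exact ih (i : ℕ) (by omega) i rfl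
          · simp [hi]
        rw [Finset.sum_congr rfl fun i _ => hinner i, Finset.sum_ite, Finset.sum_const,
          Finset.sum_const_zero, add_zero, card_filter_lt T hTn.le, nsmul_eq_mul]
        have hT : (T : ℝ) ≠ 0 := Nat.cast_ne_zero.mpr hTne
        field_simp
        ring
  exact H (j : ℕ) j rfl

end Mean


/-- Covariance of the k-th and j-th DBsample draws. -/
noncomputable def dbCov {n : ℕ} (p α : ℝ) (k j : Fin n) : ℝ :=
  (∑ x : Fin n → Bool, dbDens p α x * (b2r (x k) * b2r (x j)))
    - (∑ x : Fin n → Bool, dbDens p α x * b2r (x k))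
      * (∑ x : Fin n → Bool, dbDens p α x * b2r (x j))

/-- Partial covariance sum S(k, m) = Σ_{j ≤ m, j ≠ k} Cov(z_k, z_j) (0-based indices). -/
noncomputable def dbS {n : ℕ} (p α : ℝ) (k : Fin n) (m : ℕ) : ℝ :=
  ∑ j : Fin n, if (j : ℕ) ≤ m ∧ j ≠ k then dbCov p α k j else 0

/-- covariance-sum recursion in DBsample. In 0-based indices
(the (m+1)-st draw is sample number m+2 in the paper's 1-based notation),
for k ≤ m and m+1 < n:
S(k, m+1) = S(k, m) - (α/(m+1))·(p(1-p) + S(k, m)). -/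
theorem dbsample_covariance_sum_recursion (p α : ℝ) (hp0 : 0 < p) (hp1 : p < 1)
    (hα0 : 0 < α) (hα : α ≤ min ((1 - p) / p) (p / (1 - p)))
    (n : ℕ) (k : Fin n) (m : ℕ) (hk : (k : ℕ) ≤ m) (hm : m + 1 < n) :
    dbS p α k (m + 1)
      = dbS p α k m - (α / ((m : ℝ) + 1)) * (p * (1 - p) + dbS p α k m) := by
  set ks : Fin n := ⟨m + 1, hm⟩ with hks
  have hksv : (ks : ℕ) = m + 1 := rfl
  have hkks : k ≠ ks := fun h => by
    have : (k : ℕ) = m + 1 := by rw [h]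
    omega
  have hmean := fun j : Fin n => dbMean p α hp0 hp1 hα0 hα j
  set E2 : Fin n → ℝ :=
    fun j => ∑ x : Fin n → Bool, dbDens p α x * (b2r (x k) * b2r (x j)) with hE2
  have hcov : ∀ j : Fin n, dbCov p α k j = E2 j - p * p := by
    intro j; unfold dbCov; rw [hmean k, hmean j]
  have hE2k : E2 k = p := by
    rw [hE2]; simp only [b2r_sq]; exact hmean k
  have h1 : E2 ks = ∑ x : Fin n → Bool, dbDens p α x * (b2r (x k) * dbq p α x (m + 1)) := by
    rw [hE2]
    have hkk := key p α ks (fun x => b2r (x k))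
      (fun x y h => by
        show b2r (x k) = b2r (y k)
        rw [h k (by rw [hksv]; omega)])
    simpa using hkk
  have hexp : ∀ x : Fin n → Bool, dbDens p α x * (b2r (x k) * dbq p α x (m + 1))
      = p * (1 + α) * (dbDens p α x * b2r (x k))
        - α * ((m + 1 : ℕ) : ℝ)⁻¹
          * ∑ i : Fin n,
              dbDens p α x * (b2r (x k) * (if (i : ℕ) < m + 1 then b2r (x i) else 0)) := by
    intro x
    rw [dbq_eq p α hp0 hp1 hα0 hα x (m + 1) (Nat.succ_ne_zero m)]
    unfold phat
    simp only [indicator_eq]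
    have hpull : (∑ i : Fin n,
        dbDens p α x * (b2r (x k) * (if (i : ℕ) < m + 1 then b2r (x i) else 0)))
        = dbDens p α x * b2r (x k) * ∑ i : Fin n, (if (i : ℕ) < m + 1 then b2r (x i) else 0) := by
      rw [Finset.mul_sum]
      exact Finset.sum_congr rfl fun i _ => by ring
    rw [hpull]
    ring
  have hinner : ∀ i : Fin n,
      (∑ x : Fin n → Bool,
          dbDens p α x * (b2r (x k) * (if (i : ℕ) < m + 1 then b2r (x i) else 0)))
        = if (i : ℕ) < m + 1 then E2 i else 0 := by
    intro i
    by_cases hi : (i : ℕ) < m + 1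
    · simp only [hi, if_true, hE2]
    · simp [hi]
  have h2 : E2 ks = p * (1 + α) * p
      - α * ((m + 1 : ℕ) : ℝ)⁻¹ * ∑ i : Fin n, (if (i : ℕ) < m + 1 then E2 i else 0) := by
    rw [h1, Finset.sum_congr rfl fun x _ => hexp x, Finset.sum_sub_distrib, ← Finset.mul_sum,
      ← Finset.mul_sum, hmean k, Finset.sum_comm]
    rw [Finset.sum_congr rfl fun i _ => hinner i]
  have hcard : (univ.filter fun i : Fin n => (i : ℕ) ≤ m ∧ i ≠ k).card = m := by
    have hset : (univ.filter fun i : Fin n => (i : ℕ) ≤ m ∧ i ≠ k)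
        = (univ.filter fun i : Fin n => (i : ℕ) < m + 1).erase k := by
      ext i
      simp only [Finset.mem_filter, Finset.mem_univ, true_and, Finset.mem_erase,
        Nat.lt_succ_iff]
      tauto
    rw [hset, Finset.card_erase_of_mem
      (Finset.mem_filter.mpr ⟨Finset.mem_univ _, by omega⟩), card_filter_lt (m + 1) hm.le]
    omega
  have h3 : (∑ i : Fin n, if (i : ℕ) < m + 1 then E2 i else 0)
      = dbS p α k m + ((m : ℝ) * (p * p) + p) := by
    have hterm : ∀ i : Fin n, (if (i : ℕ) < m + 1 then E2 i else 0)
        = (if (i : ℕ) ≤ m ∧ i ≠ k then dbCov p α k i else 0)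
          + ((if (i : ℕ) ≤ m ∧ i ≠ k then p * p else 0) + (if i = k then p else 0)) := by
      intro i
      by_cases hik : i = k
      · subst hik
        rw [if_pos (by omega : (i : ℕ) < m + 1), hE2k,
          if_neg (fun h => h.2 rfl), if_neg (fun h => h.2 rfl), if_pos rfl]
        ring
      · by_cases him : (i : ℕ) ≤ m
        · rw [if_pos (by omega : (i : ℕ) < m + 1), if_pos ⟨him, hik⟩, if_pos ⟨him, hik⟩,
            if_neg hik, hcov i]
          ring
        · rw [if_neg (by omega : ¬ (i : ℕ) < m + 1), if_neg (by tauto), if_neg (by tauto),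
            if_neg hik]
          ring
    rw [Finset.sum_congr rfl fun i _ => hterm i, Finset.sum_add_distrib, Finset.sum_add_distrib]
    have hs2 : (∑ i : Fin n, if (i : ℕ) ≤ m ∧ i ≠ k then p * p else 0) = (m : ℝ) * (p * p) := by
      rw [← Finset.sum_filter, Finset.sum_const, hcard, nsmul_eq_mul]
    have hs3 : (∑ i : Fin n, if i = k then p else 0) = p := by
      rw [Finset.sum_ite_eq' univ k (fun _ => p), if_pos (Finset.mem_univ k)]
    rw [hs2, hs3]
    rfl
  have hA : dbS p α k (m + 1) = dbS p α k m + dbCov p α k ks := by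
    unfold dbS
    have hterm : ∀ j : Fin n, (if (j : ℕ) ≤ m + 1 ∧ j ≠ k then dbCov p α k j else 0)
        = (if (j : ℕ) ≤ m ∧ j ≠ k then dbCov p α k j else 0)
          + (if j = ks then dbCov p α k j else 0) := by
      intro j
      by_cases hj : j = ks
      · rw [hj, if_pos ⟨le_of_eq hksv, hkks.symm⟩,
          if_neg (fun h => absurd h.1 (by rw [hksv]; omega)), if_pos rfl, zero_add]
      · have hjv : (j : ℕ) ≠ m + 1 := fun h => hj (Fin.ext (h.trans hksv.symm))
        rw [if_neg hj, add_zero]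
        exact if_congr (by constructor <;> (rintro ⟨a, b⟩; exact ⟨by omega, b⟩)) rfl rfl
    rw [Finset.sum_congr rfl fun j _ => hterm j, Finset.sum_add_distrib,
      Finset.sum_ite_eq' univ ks (fun j => dbCov p α k j), if_pos (Finset.mem_univ ks)]
  rw [hA, hcov ks, h2, h3]
  have hm1 : ((m : ℝ) + 1) ≠ 0 := by positivity
  push_cast
  field_simp
  ring
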